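/- Let m ≥ 1 and q > 1 real, and let f(z) = Σ_{k=1}^∞ f_k (z-1)^k be a power series (no constant term) convergent on a disc around 1 containing the points q, q^2, ..., q^m. If f(q^ℓ) = 0 for all ℓ ∈ {1, ..., m}, then Σ_{k=1}^∞ f_k Σ_{ℓ=1}^m c_ℓ (q^ℓ - 1)^k = 0 where c_ℓ = 1/((q^ℓ-1)∏_{h=1,h≠ℓ}^m (q^ℓ - q^h)), and consequently f_m = -Σ_{k=m+1}^∞ f_k Σ_{ℓ=1}^m (q^ℓ-1)^{k-1}/∏_{h=1,h≠ℓ}^m (q^ℓ - q^h). -/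

import Mathlib

set_option maxHeartbeats 1000000

open Polynomial Finset

lemma basis_coeff_card_sub_one {F : Type*} [Field F] {ι : Type*} [DecidableEq ι]
    {s : Finset ι} {v : ι → F} {i : ι} (hi : i ∈ s) :
    (Lagrange.basis s v i).coeff (#s - 1) = Lagrange.nodalWeight s v i := by
  rw [Lagrange.basis_eq_prod_sub_inv_mul_nodal_div hi, ← Lagrange.nodal_erase_eq_nodal_div hi,
    coeff_C_mul]
  have h1 : (Lagrange.nodal (s.erase i) v).natDegree = #s - 1 := by
    rw [Lagrange.natDegree_nodal, card_erase_of_mem hi]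
  rw [← h1, (Lagrange.nodal_monic).coeff_natDegree, mul_one]

lemma lagrange_pow_sum {F : Type*} [Field F] {ι : Type*} [DecidableEq ι]
    {s : Finset ι} {v : ι → F} (hvs : Set.InjOn v s) {k : ℕ} (hk : k < #s) :
    ∑ i ∈ s, v i ^ k * Lagrange.nodalWeight s v i = if k + 1 = #s then 1 else 0 := by
  have hdeg : ((X : F[X]) ^ k).degree < #s := by
    rw [degree_X_pow]
    exact_mod_cast hk
  have h := Lagrange.eq_interpolate (f := (X : F[X]) ^ k) hvs hdeg
  have h2 := congrArg (fun p => Polynomial.coeff p (#s - 1)) h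
  simp only [Lagrange.interpolate_apply, finset_sum_coeff, coeff_C_mul, eval_pow, eval_X,
    coeff_X_pow] at h2
  rw [Finset.sum_congr rfl (fun i hi => by rw [basis_coeff_card_sub_one hi])] at h2
  rw [← h2]
  have : #s - 1 = k ↔ k + 1 = #s := by omega
  simp [this]

/-- If `f(z) = Σ_{k≥1} f_k (z-1)^k` converges (absolutely) on a disc around `1` containing
`q, q², …, q^m` and `f(q^ℓ) = 0` for `ℓ = 1,…,m`, then the `c_ℓ`-weighted combination of
these conditions vanishes, and `f_m = -Σ_{k>m} f_k Σ_ℓ (q^ℓ-1)^{k-1}/∏_{h≠ℓ}(q^ℓ-q^h)`. -/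
theorem stmt15 (m : ℕ) (hm : 1 ≤ m) (q : ℝ) (hq : 1 < q) (f : ℕ → ℂ)
    (r : ℝ) (hr : q ^ m - 1 < r)
    (hconv : Summable fun k : ℕ => ‖f k‖ * r ^ k)
    (hzero : ∀ ℓ : ℕ, 1 ≤ ℓ → ℓ ≤ m →
      ∑' k : ℕ, f (k + 1) * ((q : ℂ) ^ ℓ - 1) ^ (k + 1) = 0) :
    (∑' k : ℕ, f (k + 1) * ∑ ℓ ∈ Finset.Icc 1 m,
        ((q : ℂ) ^ ℓ - 1) ^ (k + 1) /
          (((q : ℂ) ^ ℓ - 1) *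
            ∏ h ∈ (Finset.Icc 1 m).erase ℓ, ((q : ℂ) ^ ℓ - (q : ℂ) ^ h)) = 0) ∧
    f m = -∑' k : ℕ, f (m + 1 + k) * ∑ ℓ ∈ Finset.Icc 1 m,
        ((q : ℂ) ^ ℓ - 1) ^ (m + k) /
          ∏ h ∈ (Finset.Icc 1 m).erase ℓ, ((q : ℂ) ^ ℓ - (q : ℂ) ^ h) := by
  set s : Finset ℕ := Finset.Icc 1 m with hs
  set v : ℕ → ℂ := fun ℓ => (q : ℂ) ^ ℓ - 1 with hv
  set w : ℕ → ℂ := fun ℓ => Lagrange.nodalWeight s v ℓ with hw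
  have hcard : #s = m := by simp [hs]
  -- basic facts
  have hq1 : ∀ ℓ ∈ s, 1 < q ^ ℓ := by
    intro ℓ hℓ
    simp only [hs, Finset.mem_Icc] at hℓ
    exact one_lt_pow₀ hq (by omega)
  have hvne : ∀ ℓ ∈ s, v ℓ ≠ 0 := by
    intro ℓ hℓ
    have := hq1 ℓ hℓ
    simp only [hv, sub_ne_zero]
    intro h
    have : (q : ℝ) ^ ℓ = 1 := by exact_mod_cast h
    linarith
  have hinj : Set.InjOn v s := by
    intro a ha b hb hab
    have h1 : ((q ^ a : ℝ) : ℂ) = ((q ^ b : ℝ) : ℂ) := by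
      push_cast
      have := sub_left_injective hab
      simpa [hv] using hab
    have h2 : (q : ℝ) ^ a = q ^ b := by exact_mod_cast h1
    exact (strictMono_nat_of_lt_succ (fun n => pow_lt_pow_right₀ hq (Nat.lt_succ_self n))).injective h2
  have hvnorm : ∀ ℓ ∈ s, ‖v ℓ‖ ≤ r := by
    intro ℓ hℓ
    have h1 := hq1 ℓ hℓ
    simp only [hs, Finset.mem_Icc] at hℓ
    have h2 : (q : ℝ) ^ ℓ ≤ q ^ m := pow_le_pow_right₀ (le_of_lt hq) hℓ.2
    have : v ℓ = ((q ^ ℓ - 1 : ℝ) : ℂ) := by push_cast [hv]; ring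
    rw [this, Complex.norm_real, Real.norm_eq_abs, abs_of_nonneg (by linarith)]
    linarith
  -- summability
  have hsum0 : Summable fun k : ℕ => ‖f (k + 1)‖ * r ^ (k + 1) :=
    (summable_nat_add_iff 1).2 hconv
  have hsum1 : ∀ x : ℂ, ‖x‖ ≤ r → Summable fun k : ℕ => f (k + 1) * x ^ (k + 1) := by
    intro x hx
    apply Summable.of_norm_bounded hsum0
    intro k
    rw [norm_mul, norm_pow]
    exact mul_le_mul_of_nonneg_left (pow_le_pow_left₀ (norm_nonneg x) hx _) (norm_nonneg _)
  -- the auxiliary family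
  set Fa : ℕ → ℕ → ℂ := fun ℓ k => (f (k + 1) * v ℓ ^ (k + 1)) * ((v ℓ)⁻¹ * w ℓ) with hFa
  have hFsum : ∀ ℓ ∈ s, Summable (Fa ℓ) := fun ℓ hℓ =>
    (hsum1 (v ℓ) (hvnorm ℓ hℓ)).mul_right _
  have hFtsum : ∀ ℓ ∈ s, ∑' k, Fa ℓ k = 0 := by
    intro ℓ hℓ
    have hℓ' := hℓ
    simp only [hs, Finset.mem_Icc] at hℓ'
    rw [hFa]
    rw [tsum_mul_right, hzero ℓ hℓ'.1 hℓ'.2, zero_mul]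
  -- rewrite the first sum pointwise
  set g : ℕ → ℂ := fun k => ∑ ℓ ∈ s, Fa ℓ k with hg
  have hg_eq : ∀ k : ℕ, g k = f (k + 1) * ∑ ℓ ∈ s, v ℓ ^ k * w ℓ := by
    intro k
    rw [hg, Finset.mul_sum]
    refine Finset.sum_congr rfl fun ℓ hℓ => ?_
    have h0 := hvne ℓ hℓ
    rw [hFa]
    field_simp
    ring
  have hgsum : Summable g := summable_sum fun ℓ hℓ => hFsum ℓ hℓ
  have hgtsum : ∑' k, g k = 0 := by
    rw [hg, Summable.tsum_finsetSum fun ℓ hℓ => hFsum ℓ hℓ]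
    exact Finset.sum_eq_zero hFtsum
  -- first conjunct summand equality
  have hfirst : ∀ k : ℕ,
      f (k + 1) * ∑ ℓ ∈ s, v ℓ ^ (k + 1) /
        (v ℓ * ∏ h ∈ s.erase ℓ, ((q : ℂ) ^ ℓ - (q : ℂ) ^ h)) = g k := by
    intro k
    rw [hg_eq]
    congr 1
    refine Finset.sum_congr rfl fun ℓ hℓ => ?_
    have h0 := hvne ℓ hℓ
    have hprod : ∏ h ∈ s.erase ℓ, ((q : ℂ) ^ ℓ - (q : ℂ) ^ h)
        = ∏ h ∈ s.erase ℓ, (v ℓ - v h) := by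
      refine Finset.prod_congr rfl fun h _ => ?_
      simp [hv]
    rw [hprod]
    have hwE : w ℓ = (∏ h ∈ s.erase ℓ, (v ℓ - v h))⁻¹ := by
      simp only [hw, Lagrange.nodalWeight, Finset.prod_inv_distrib]
    rw [hwE]
    rcases eq_or_ne (∏ h ∈ s.erase ℓ, (v ℓ - v h)) 0 with hP | hP
    · simp [hP]
    · field_simp
      ring
  constructor
  · rw [tsum_congr hfirst]
    exact hgtsum
  · -- second conjunct
    have hsplit := Summable.sum_add_tsum_nat_add m hgsum
    rw [hgtsum] at hsplit
    have hrange : ∑ i ∈ Finset.range m, g i = f m := by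
      have : ∀ i ∈ Finset.range m, g i = if i = m - 1 then f m else 0 := by
        intro i hi
        rw [Finset.mem_range] at hi
        rw [hg_eq, lagrange_pow_sum hinj (by omega : i < #s), hcard]
        rcases eq_or_ne i (m - 1) with h | h
        · have hi1 : i + 1 = m := by omega
          have hm1 : m - 1 + 1 = m := by omega
          simp [h, hi1, hm1]
        · have hi1 : i + 1 ≠ m := by omega
          simp [h, hi1]
      rw [Finset.sum_congr rfl this, Finset.sum_ite_eq' (Finset.range m) (m - 1) fun _ => f m]
      simp [Nat.sub_lt hm Nat.one_pos]
    have hgm : ∀ k : ℕ, g (k + m) = f (m + 1 + k) * ∑ ℓ ∈ s,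
        v ℓ ^ (m + k) / ∏ h ∈ s.erase ℓ, ((q : ℂ) ^ ℓ - (q : ℂ) ^ h) := by
      intro k
      rw [hg_eq]
      have h1 : k + m + 1 = m + 1 + k := by omega
      rw [h1]
      congr 1
      refine Finset.sum_congr rfl fun ℓ hℓ => ?_
      have hprod : ∏ h ∈ s.erase ℓ, ((q : ℂ) ^ ℓ - (q : ℂ) ^ h)
          = ∏ h ∈ s.erase ℓ, (v ℓ - v h) := by
        refine Finset.prod_congr rfl fun h _ => ?_
        simp [hv]
      rw [hprod, div_eq_mul_inv]
      simp only [hw, Lagrange.nodalWeight, Finset.prod_inv_distrib]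
      rw [add_comm k m]
    have : ∑' k, g (k + m) = ∑' k : ℕ, f (m + 1 + k) * ∑ ℓ ∈ s,
        v ℓ ^ (m + k) / ∏ h ∈ s.erase ℓ, ((q : ℂ) ^ ℓ - (q : ℂ) ^ h) := tsum_congr hgm
    rw [hrange, this] at hsplit
    linear_combination hsplit
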